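/- arXiv:2304.02058 — 3 statements merged into one kernel-verified Lean document; each statement's English description precedes it below -/
import Mathlib

section
/- Let h : [a,b] → ℝ be continuously differentiable with h(a) ≥ 0, and suppose h'(t) ≥ d/φ for all t ∈ [a,b] with h(t) < d, where d ≥ 0 and φ > 0 and b - a ≥ φ. Then h(b) ≥ d. -/
/-- Recovery step of Proposition 1: if `h a ≥ 0` and `h' t ≥ d/φ` whenever `h t < d`
on `[a,b]`, with `d ≥ 0`, `φ > 0` and `b - a ≥ φ`, then `h b ≥ d`. -/
theorem stmt_1 (h : ℝ → ℝ) (a b d φ : ℝ) (hd : 0 ≤ d) (hφ : 0 < φ)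
    (hab : φ ≤ b - a) (hC : ContDiff ℝ 1 h) (ha : 0 ≤ h a)
    (hder : ∀ t ∈ Set.Icc a b, h t < d → d / φ ≤ deriv h t) :
    d ≤ h b := by
  have hdiff : Differentiable ℝ h := hC.differentiable one_ne_zero
  have hcont : Continuous h := hdiff.continuous
  have hba : a ≤ b := by linarith
  have hdφ : 0 ≤ d / φ := div_nonneg hd hφ.le
  by_contra hb
  push_neg at hb
  set S : Set ℝ := Set.Icc a b ∩ {t | d ≤ h t} with hSdef
  by_cases hS : S.Nonempty
  · -- let t1 be the last time in S
    have hSclosed : IsClosed S := isClosed_Icc.inter (isClosed_le continuous_const hcont)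
    have hSbdd : BddAbove S := ⟨b, fun x hx => hx.1.2⟩
    set t1 := sSup S with ht1def
    have ht1S : t1 ∈ S := hSclosed.csSup_mem hS hSbdd
    obtain ⟨⟨hat1, ht1b⟩, ht1d⟩ := ht1S
    have hlt : ∀ t ∈ Set.Ioc t1 b, h t < d := by
      intro t ⟨ht1t, htb⟩
      by_contra hcon
      push_neg at hcon
      have : t ∈ S := ⟨⟨le_trans hat1 ht1t.le, htb⟩, hcon⟩
      exact absurd (le_csSup hSbdd this) (not_le.2 ht1t)
    have hmono : MonotoneOn h (Set.Icc t1 b) := by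
      apply monotoneOn_of_deriv_nonneg (convex_Icc t1 b) hcont.continuousOn
        (hdiff.differentiableOn)
      intro x hx
      rw [interior_Icc] at hx
      refine le_trans hdφ (hder x ⟨le_trans hat1 hx.1.le, hx.2.le⟩ ?_)
      exact hlt x ⟨hx.1, hx.2.le⟩
    have h1 := hmono (Set.left_mem_Icc.2 ht1b) (Set.right_mem_Icc.2 ht1b) ht1b
    have h2 : d ≤ h t1 := ht1d
    linarith
  · -- h < d on all of [a,b]
    have hall : ∀ t ∈ Set.Icc a b, h t < d := by
      intro t ht
      by_contra hcon
      push_neg at hcon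
      exact hS ⟨t, ht, hcon⟩
    have := (convex_Icc a b).mul_sub_le_image_sub_of_le_deriv hcont.continuousOn
      hdiff.differentiableOn
      (fun x hx => hder x (interior_subset hx) (hall x (interior_subset hx)))
      a (Set.left_mem_Icc.2 hba) b (Set.right_mem_Icc.2 hba) hba
    have hkey : d / φ * φ ≤ d / φ * (b - a) := by
      exact mul_le_mul_of_nonneg_left hab hdφ
    rw [div_mul_cancel₀ d hφ.ne'] at hkey
    linarith
end

section
/- Let h : [a,b] → ℝ be continuously differentiable with h(a) ≥ 0, and suppose there exist d > 0, φ > 0, η ≥ 0 and a continuous strictly increasing α with α(0)=0 such that: (i) h'(t) ≥ d/φ whenever 0 ≤ h(t) < d, and (ii) h'(t) ≥ -α(h(t) - d) + η whenever h(t) ≥ d. Then h(t) ≥ 0 for all t ∈ [a,b], and moreover if b - a ≥ φ then there exists t' ∈ [a,b] with h(t) ≥ d for all t ∈ [t', b]. -/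
open Set

/-- Online-phase conclusion of Proposition 1: under conditions (2b)-(2c) the trajectory
stays in `{h ≥ 0}`, and if the phase lasts at least `φ` it reaches and remains in
`{h ≥ d}`. -/
theorem stmt_3 (h : ℝ → ℝ) (a b d φ η : ℝ) (α : ℝ → ℝ)
    (hab : a ≤ b) (hC : ContDiff ℝ 1 h)
    (hd : 0 < d) (hφ : 0 < φ) (hη : 0 ≤ η)
    (hαc : Continuous α) (hαm : StrictMono α) (hα0 : α 0 = 0)
    (ha : 0 ≤ h a)
    (h1 : ∀ t ∈ Set.Icc a b, 0 ≤ h t → h t < d → d / φ ≤ deriv h t)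
    (h2 : ∀ t ∈ Set.Icc a b, d ≤ h t → -α (h t - d) + η ≤ deriv h t) :
    (∀ t ∈ Set.Icc a b, 0 ≤ h t) ∧
      (φ ≤ b - a → ∃ t' ∈ Set.Icc a b, ∀ t ∈ Set.Icc t' b, d ≤ h t) := by
  have hdiff : Differentiable ℝ h := hC.differentiable one_ne_zero
  have hcont : Continuous h := hdiff.continuous
  have hdc : Continuous (deriv h) := hC.continuous_deriv le_rfl
  -- Local push lemma: if h c ∈ [0, d) with c < t in [a,b], then h cannot be < h c on all of (c,t].
  have L1 : ∀ c t : ℝ, a ≤ c → c < t → t ≤ b → 0 ≤ h c → h c < d →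
      (∀ u, c < u → u ≤ t → h u < h c) → False := by
    intro c t hac hct htb hc0 hcd hbad
    have hdpos : 0 < deriv h c :=
      lt_of_lt_of_le (div_pos hd hφ) (h1 c ⟨hac, hct.le.trans htb⟩ hc0 hcd)
    obtain ⟨δ, hδ, hball⟩ := Metric.isOpen_iff.mp
      (isOpen_lt continuous_const hdc) c hdpos
    set t₁ := min t (c + δ / 2) with ht₁def
    have hct₁ : c < t₁ := lt_min hct (by linarith)
    have hmono : StrictMonoOn h (Icc c t₁) := by
      apply strictMonoOn_of_deriv_pos (convex_Icc _ _) hcont.continuousOn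
      intro u hu
      rw [interior_Icc, mem_Ioo] at hu
      have hu2 : u < c + δ / 2 := lt_of_lt_of_le hu.2 (min_le_right _ _)
      exact hball (by
        rw [Metric.mem_ball, Real.dist_eq, abs_lt]
        constructor <;> linarith [hu.1])
    have h1' := hmono ⟨le_rfl, hct₁.le⟩ ⟨hct₁.le, le_rfl⟩ hct₁
    exact absurd h1' (not_lt.mpr (hbad t₁ hct₁ (min_le_left _ _)).le)
  -- Limit lemma: if h < r on (c,t] then h c ≤ r.
  have L2 : ∀ c t r : ℝ, c < t → (∀ u, c < u → u ≤ t → h u < r) → h c ≤ r := by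
    intro c t r hct hbad
    by_contra hgt
    push_neg at hgt
    obtain ⟨δ, hδ, hball⟩ := Metric.isOpen_iff.mp
      (isOpen_lt continuous_const hcont) c hgt
    set u := min t (c + δ / 2) with hu
    have hcu : c < u := lt_min hct (by linarith)
    have hu2 : u ≤ c + δ / 2 := min_le_right _ _
    have : r < h u := hball (by
      rw [Metric.mem_ball, Real.dist_eq, abs_lt]
      constructor <;> linarith)
    exact absurd (hbad u hcu (min_le_left _ _)) (not_lt.mpr this.le)
  -- Nonnegativity forward in time.
  have nonneg : ∀ s t : ℝ, a ≤ s → s ≤ t → t ≤ b → 0 ≤ h s → 0 ≤ h t := by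
    intro s t has hst htb hs0
    by_contra hneg
    push_neg at hneg
    set S := Icc s t ∩ {u | 0 ≤ h u} with hS
    have hSne : S.Nonempty := ⟨s, ⟨le_rfl, hst⟩, hs0⟩
    have hSbdd : BddAbove S := ⟨t, fun u hu => hu.1.2⟩
    have hScomp : IsCompact S :=
      isCompact_Icc.inter_right (isClosed_le continuous_const hcont)
    have hcmem : sSup S ∈ S := hScomp.sSup_mem hSne
    set c := sSup S with hc
    have hbad : ∀ u, c < u → u ≤ t → h u < 0 := by
      intro u hcu hut
      by_contra hge
      push_neg at hge
      exact absurd (le_csSup hSbdd ⟨⟨hcmem.1.1.trans hcu.le, hut⟩, hge⟩) (not_le.mpr hcu)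
    have hct : c < t := lt_of_le_of_ne hcmem.1.2 (by
      intro hEq; exact absurd (hEq ▸ hcmem.2) (not_le.mpr hneg))
    have hc0 : h c = 0 := le_antisymm (L2 c t 0 hct hbad) hcmem.2
    exact L1 c t (has.trans hcmem.1.1) hct htb (le_of_eq hc0.symm)
      (hc0 ▸ hd) (fun u hcu hut => hc0 ▸ hbad u hcu hut)
  -- Invariance: forward in time, h stays above min (h s) d.
  have inv : ∀ s t : ℝ, a ≤ s → s ≤ t → t ≤ b → 0 ≤ h s → min (h s) d ≤ h t := by
    intro s t has hst htb hs0
    by_contra hlt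
    push_neg at hlt
    set m := min (h s) d with hm
    have hm0 : 0 ≤ m := le_min hs0 hd.le
    set S := Icc s t ∩ {u | m ≤ h u} with hS
    have hSne : S.Nonempty := ⟨s, ⟨le_rfl, hst⟩, show m ≤ h s from min_le_left _ _⟩
    have hSbdd : BddAbove S := ⟨t, fun u hu => hu.1.2⟩
    have hScomp : IsCompact S :=
      isCompact_Icc.inter_right (isClosed_le continuous_const hcont)
    have hcmem : sSup S ∈ S := hScomp.sSup_mem hSne
    set c := sSup S with hc
    have hbad : ∀ u, c < u → u ≤ t → h u < m := by
      intro u hcu hut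
      by_contra hge
      push_neg at hge
      exact absurd (le_csSup hSbdd ⟨⟨hcmem.1.1.trans hcu.le, hut⟩, hge⟩) (not_le.mpr hcu)
    have hct : c < t := lt_of_le_of_ne hcmem.1.2 (by
      intro hEq; exact absurd (hEq ▸ hcmem.2) (not_le.mpr hlt))
    have hac : a ≤ c := has.trans hcmem.1.1
    rcases lt_or_ge (h c) d with hcase | hcase
    · exact L1 c t hac hct htb (hm0.trans hcmem.2) hcase
        (fun u hcu hut => lt_of_lt_of_le (hbad u hcu hut) hcmem.2)
    · -- h c ≥ d, so m = d; on (c,t) we have 0 ≤ h < d, hence deriv > 0.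
      have hmono : StrictMonoOn h (Icc c t) := by
        apply strictMonoOn_of_deriv_pos (convex_Icc _ _) hcont.continuousOn
        intro u hu
        rw [interior_Icc, mem_Ioo] at hu
        have hu0 : 0 ≤ h u := nonneg s u has (hcmem.1.1.trans hu.1.le) (hu.2.le.trans htb) hs0
        have hud : h u < d := lt_of_lt_of_le (hbad u hu.1 hu.2.le) (min_le_right _ _)
        exact lt_of_lt_of_le (div_pos hd hφ)
          (h1 u ⟨hac.trans hu.1.le, hu.2.le.trans htb⟩ hu0 hud)
      have := hmono ⟨le_rfl, hct.le⟩ ⟨hct.le, le_rfl⟩ hct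
      have hmd : m ≤ d := min_le_right _ _
      linarith [hbad t hct le_rfl]
  refine ⟨fun t ht => nonneg a t le_rfl ht.1 ht.2 ha, ?_⟩
  intro hba
  by_cases hex : ∃ t' ∈ Icc a (a + φ), d ≤ h t'
  · obtain ⟨t', ht'mem, ht'd⟩ := hex
    refine ⟨t', ⟨ht'mem.1, by linarith [ht'mem.2]⟩, fun t ht => ?_⟩
    have := inv t' t ht'mem.1 ht.1 ht.2 (hd.le.trans ht'd)
    rwa [min_eq_right ht'd] at this
  · push_neg at hex
    exfalso
    have haφb : a + φ ≤ b := by linarith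
    -- h grows at rate ≥ d/φ on [a, a+φ], so h (a+φ) ≥ h a + d ≥ d, contradiction.
    have hgmono : MonotoneOn (fun u => h u - d / φ * u) (Icc a (a + φ)) := by
      apply monotoneOn_of_deriv_nonneg (convex_Icc _ _)
        (hcont.sub (continuous_const.mul continuous_id)).continuousOn
        (fun u _ => ((hdiff u).sub ((differentiable_id.const_mul _) u)).differentiableWithinAt)
      intro u hu
      rw [interior_Icc, mem_Ioo] at hu
      have humem : u ∈ Icc a b := ⟨hu.1.le, hu.2.le.trans haφb⟩
      have hu0 : 0 ≤ h u := nonneg a u le_rfl hu.1.le humem.2 ha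
      have hud : h u < d := hex u ⟨hu.1.le, hu.2.le⟩
      have hder : d / φ ≤ deriv h u := h1 u humem hu0 hud
      have hda : HasDerivAt (fun u : ℝ => d / φ * u) (d / φ) u := by
        simpa using (hasDerivAt_id u).const_mul (d / φ)
      show 0 ≤ deriv (h - fun u => d / φ * u) u
      rw [deriv_sub (hdiff u) hda.differentiableAt, hda.deriv]
      linarith
    have hkey := hgmono ⟨le_rfl, by linarith⟩ ⟨by linarith, le_rfl⟩ (by linarith)
    simp only at hkey
    have hdφ : d / φ * (a + φ) - d / φ * a = d := by
      field_simp
      ring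
    have : h a + d ≤ h (a + φ) := by nlinarith [hkey]
    have := hex (a + φ) ⟨by linarith, le_rfl⟩
    linarith
end

section
/- Suppose h : ℝ → ℝ is continuously differentiable with h(0) = d ≥ 0, the system alternates between offline intervals of length at most τ > 0 during which h'(t) ≥ -d/τ, and online intervals of length at least φ > 0 during which h'(t) ≥ d/φ whenever h(t) < d and h'(t) ≥ 0 whenever h(t) ≥ d. Assume every offline interval begins at a time when h ≥ d. Then h(t) ≥ 0 for all t ≥ 0. -/
/-- Safety over infinitely many fault/recovery cycles (Proposition 1 with η = 0):
`T (2k)`–`T (2k+1)` are offline intervals of length at most `τ`, each starting with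
`h ≥ d`, and `T (2k+1)`–`T (2k+2)` are online intervals of length at least `φ`. -/
theorem stmt_4 (h : ℝ → ℝ) (d τ φ : ℝ) (hd : 0 ≤ d) (hτ : 0 < τ) (hφ : 0 < φ)
    (hC : ContDiff ℝ 1 h) (h0 : h 0 = d)
    (T : ℕ → ℝ) (hT0 : T 0 = 0) (hTmono : StrictMono T)
    (hTtop : Filter.Tendsto T Filter.atTop Filter.atTop)
    (hofflen : ∀ k : ℕ, T (2 * k + 1) - T (2 * k) ≤ τ)
    (honlen : ∀ k : ℕ, φ ≤ T (2 * k + 2) - T (2 * k + 1))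
    (hoffstart : ∀ k : ℕ, d ≤ h (T (2 * k)))
    (hoffder : ∀ k : ℕ, ∀ t ∈ Set.Icc (T (2 * k)) (T (2 * k + 1)),
      -d / τ ≤ deriv h t)
    (honder1 : ∀ k : ℕ, ∀ t ∈ Set.Icc (T (2 * k + 1)) (T (2 * k + 2)),
      h t < d → d / φ ≤ deriv h t)
    (honder2 : ∀ k : ℕ, ∀ t ∈ Set.Icc (T (2 * k + 1)) (T (2 * k + 2)),
      d ≤ h t → 0 ≤ deriv h t) :
    ∀ t : ℝ, 0 ≤ t → 0 ≤ h t := by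
  have hdiff : Differentiable ℝ h := hC.differentiable one_ne_zero
  have hcont : Continuous h := hdiff.continuous
  -- offline intervals: h t ≥ 0
  have key_off : ∀ k : ℕ, ∀ t ∈ Set.Icc (T (2 * k)) (T (2 * k + 1)), 0 ≤ h t := by
    intro k t ht
    set a := T (2 * k) with ha
    set b := T (2 * k + 1) with hb
    have hg : MonotoneOn (fun s => h s + (d / τ) * s) (Set.Icc a b) := by
      apply monotoneOn_of_deriv_nonneg (convex_Icc a b)
      · exact (hcont.add (continuous_const.mul continuous_id)).continuousOn
      · exact (hdiff.add ((differentiable_const _).mul differentiable_id)).differentiableOn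
      · intro x hx
        have hx' : x ∈ Set.Icc a b := interior_subset hx
        have hder : deriv (fun s => h s + (d / τ) * s) x = deriv h x + d / τ := by
          have := (((hdiff x).hasDerivAt.add ((hasDerivAt_id x).const_mul (d / τ)) :
            HasDerivAt (fun s => h s + (d / τ) * s) _ x)).deriv
          exact this.trans (by simp)
        rw [hder]
        have := hoffder k x hx'
        have hneg : -d / τ = -(d / τ) := by ring
        linarith [this, hneg ▸ this]
    have hab : a ≤ b := (hTmono (Nat.lt_succ_self _)).le
    have h1 : h a + (d / τ) * a ≤ h t + (d / τ) * t :=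
      hg (Set.left_mem_Icc.mpr hab) ht ht.1
    have h2 : (d / τ) * (t - a) ≤ (d / τ) * τ := by
      apply mul_le_mul_of_nonneg_left _ (div_nonneg hd hτ.le)
      have := hofflen k
      have := ht.2
      linarith
    have h3 : (d / τ) * τ = d := div_mul_cancel₀ d hτ.ne'
    have h4 : d ≤ h a := hoffstart k
    nlinarith
  -- online intervals: h t ≥ 0
  have key_on : ∀ k : ℕ, ∀ t ∈ Set.Icc (T (2 * k + 1)) (T (2 * k + 2)), 0 ≤ h t := by
    intro k t ht
    have hmono : MonotoneOn h (Set.Icc (T (2 * k + 1)) (T (2 * k + 2))) := by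
      apply monotoneOn_of_deriv_nonneg (convex_Icc _ _) hcont.continuousOn
        hdiff.differentiableOn
      intro x hx
      have hx' : x ∈ Set.Icc (T (2 * k + 1)) (T (2 * k + 2)) := interior_subset hx
      rcases lt_or_ge (h x) d with hlt | hge
      · exact le_trans (div_nonneg hd hφ.le) (honder1 k x hx' hlt)
      · exact honder2 k x hx' hge
    have hab : T (2 * k + 1) ≤ T (2 * k + 2) := (hTmono (Nat.lt_succ_self _)).le
    have h1 : h (T (2 * k + 1)) ≤ h t := hmono (Set.left_mem_Icc.mpr hab) ht ht.1
    have h2 : 0 ≤ h (T (2 * k + 1)) :=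
      key_off k _ (Set.right_mem_Icc.mpr (hTmono (Nat.lt_succ_self _)).le)
    linarith
  -- any interval [T n, T (n+1)]
  have key : ∀ n : ℕ, ∀ t ∈ Set.Icc (T n) (T (n + 1)), 0 ≤ h t := by
    intro n t ht
    rcases Nat.even_or_odd n with ⟨k, hk⟩ | ⟨k, hk⟩
    · have : n = 2 * k := by omega
      subst this
      exact key_off k t ht
    · have : n = 2 * k + 1 := by omega
      subst this
      exact key_on k t ht
  -- induction: [0, T n]
  have main : ∀ n : ℕ, ∀ t ∈ Set.Icc (0 : ℝ) (T n), 0 ≤ h t := by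
    intro n
    induction n with
    | zero =>
      intro t ht
      rw [hT0] at ht
      have : t = 0 := le_antisymm ht.2 ht.1
      rw [this, h0]; exact hd
    | succ n ih =>
      intro t ht
      rcases le_total t (T n) with hle | hge
      · exact ih t ⟨ht.1, hle⟩
      · exact key n t ⟨hge, ht.2⟩
  intro t ht
  obtain ⟨n, hn⟩ : ∃ n, t < T n := (hTtop.eventually (Filter.eventually_gt_atTop t)).exists
  exact main n t ⟨ht, hn.le⟩
end
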